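/- Suppose η = +1 (call case) and the European values are strictly positive: e_k(x) > 0 for every k < n and x ∈ C. Then the stopping regions are star-shaped away from the origin in (s,z): if x = (s,y,z) ∈ S_k for some k < n and γ ≥ 1, then γ∘x = (γs, y, γz) ∈ S_k. -/

import Mathlib

open MeasureTheory ProbabilityTheory

/-- The ambient space `ℝ^{d₁} × ℝ^{d₂} × ℝ^{d₃}` for the state `x = (s, y, z)`. -/
abbrev StateSpace (d₁ d₂ d₃ : ℕ) : Type :=
  (Fin d₁ → ℝ) × (Fin d₂ → ℝ) × (Fin d₃ → ℝ)

/-- Call case (`η = +1`): suppose the European values are strictly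
positive, `e_k(x) > 0` for every `k < n` and `x ∈ C`, where `e_n = φ(n,·)` and
`e_k(x) = ∫ e_{k+1} dκ_k(x)`.  Then the stopping regions
`S_k = {x ∈ C : v_k(x) = φ(k,x)}` are star-shaped away from the origin in `(s,z)`:
if `x = (s,y,z) ∈ S_k` for some `k < n` and `γ ≥ 1`, then
`γ∘x = (γs, y, γz) ∈ S_k`. -/
theorem stmt_7
    {d₁ d₂ d₃ : ℕ}
    (C : Set (StateSpace d₁ d₂ d₃)) (hCmeas : MeasurableSet C)
    (scale : ℝ → StateSpace d₁ d₂ d₃ → StateSpace d₁ d₂ d₃)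
    (hscale : ∀ γ x, scale γ x = (γ • x.1, x.2.1, γ • x.2.2))
    (hC : ∀ γ > (0 : ℝ), ∀ x ∈ C, scale γ x ∈ C)
    (n : ℕ) (hn : 1 ≤ n) (t : ℕ → ℝ) (ht : ∀ i < n, t i < t (i + 1))
    (a : ℝ) (ha : 0 < a)
    (La : Set (StateSpace d₁ d₂ d₃ → ℝ))
    (hLa : La = {ψ | ContinuousOn ψ C ∧
      ∃ c > 0, ∀ x ∈ C, |ψ x| ≤ c * (1 + ‖x‖ ^ a)})
    (α β : StateSpace d₁ d₂ d₃ → ℝ)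
    (hαc : ContinuousOn α C) (hαpos : ∀ x ∈ C, 0 < α x)
    (hαhom : ∀ γ > (0 : ℝ), ∀ x ∈ C, α (scale γ x) = γ * α x)
    (hβc : ContinuousOn β C) (hβnn : ∀ x ∈ C, 0 ≤ β x)
    (hβhom : ∀ γ > (0 : ℝ), ∀ x ∈ C, β (scale γ x) = γ * β x)
    (K r η : ℝ) (hK : 0 < K) (hr : 0 ≤ r) (hη : η = 1)
    (φ : ℕ → StateSpace d₁ d₂ d₃ → ℝ)
    (hφdef : ∀ k ≤ n, ∀ x ∈ C,
      φ k x = Real.exp (-(r * t k)) * max (η * (α x - β x - K)) 0)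
    (hφLa : ∀ k ≤ n, φ k ∈ La)
    (κ : ℕ → Kernel (StateSpace d₁ d₂ d₃) (StateSpace d₁ d₂ d₃))
    (hκ : ∀ k, IsMarkovKernel (κ k))
    (hκC : ∀ k < n, ∀ x ∈ C, (κ k) x Cᶜ = 0)
    (hgc : ∀ k < n, ∀ ψ ∈ La,
      (∀ x ∈ C, Integrable ψ ((κ k) x)) ∧
      (fun x => ∫ y, ψ y ∂((κ k) x)) ∈ La)
    (hκscale : ∀ k < n, ∀ γ > (0 : ℝ), ∀ x ∈ C,
      Measure.map (scale γ) ((κ k) x) = (κ k) (scale γ x))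
    (v : ℕ → StateSpace d₁ d₂ d₃ → ℝ)
    (hvn : ∀ x ∈ C, v n x = φ n x)
    (hv : ∀ k < n, ∀ x ∈ C, v k x = max (φ k x) (∫ y, v (k + 1) y ∂((κ k) x)))
    (e : ℕ → StateSpace d₁ d₂ d₃ → ℝ)
    (hen : ∀ x ∈ C, e n x = φ n x)
    (he : ∀ k < n, ∀ x ∈ C, e k x = ∫ y, e (k + 1) y ∂((κ k) x))
    (hepos : ∀ k < n, ∀ x ∈ C, 0 < e k x)
    (S : ℕ → Set (StateSpace d₁ d₂ d₃))
    (hS : ∀ k, S k = {x | x ∈ C ∧ v k x = φ k x}) :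
    ∀ k < n, ∀ x ∈ S k, ∀ γ : ℝ, 1 ≤ γ → scale γ x ∈ S k := by

  subst hη
  -- measurability of the scaling maps
  have hmeas : ∀ γ : ℝ, Measurable (scale γ) := by
    intro γ
    have h : scale γ = fun x : StateSpace d₁ d₂ d₃ => (γ • x.1, x.2.1, γ • x.2.2) :=
      funext (hscale γ)
    rw [h]
    exact (measurable_fst.const_smul γ).prodMk
      ((measurable_snd.fst).prodMk ((measurable_snd.snd).const_smul γ))
  -- a.e. membership in C
  have hAE : ∀ k < n, ∀ x ∈ C, ∀ᵐ z ∂((κ k) x), z ∈ C := by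
    intro k hk x hx
    rw [ae_iff]
    simpa [Set.compl_def] using hκC k hk x hx
  -- La only depends on values on C
  have hLa_congr : ∀ ψ ∈ La, ∀ ψ' : StateSpace d₁ d₂ d₃ → ℝ,
      (∀ x ∈ C, ψ x = ψ' x) → ψ' ∈ La := by
    intro ψ hψ ψ' hagree
    rw [hLa] at hψ ⊢
    obtain ⟨hc, c, hcpos, hb⟩ := hψ
    refine ⟨hc.congr fun x hx => (hagree x hx).symm, c, hcpos, fun x hx => ?_⟩
    rw [← hagree x hx]; exact hb x hx
  -- La is closed under max
  have hLa_max : ∀ ψ ∈ La, ∀ ψ' ∈ La, (fun x => max (ψ x) (ψ' x)) ∈ La := by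
    intro ψ hψ ψ' hψ'
    rw [hLa] at hψ hψ' ⊢
    obtain ⟨hc, c, hcpos, hb⟩ := hψ
    obtain ⟨hc', c', hcpos', hb'⟩ := hψ'
    refine ⟨hc.sup hc', c + c', by linarith, fun x hx => ?_⟩
    have h1 := hb x hx; have h2 := hb' x hx
    have habs : |max (ψ x) (ψ' x)| ≤ |ψ x| + |ψ' x| := by
      rcases max_cases (ψ x) (ψ' x) with ⟨hm, _⟩ | ⟨hm, _⟩ <;> rw [hm] <;>
        [nlinarith [abs_nonneg (ψ' x)]; nlinarith [abs_nonneg (ψ x)]]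
    nlinarith [Real.rpow_nonneg (norm_nonneg x) a]
  -- payoff scaling inequality
  have hφscale : ∀ k ≤ n, ∀ γ : ℝ, 1 ≤ γ → ∀ x ∈ C,
      φ k (scale γ x) ≤ γ * φ k x + (γ - 1) * K * Real.exp (-(r * t k)) := by
    intro k hk γ hγ x hx
    have hγ0 : (0:ℝ) < γ := by linarith
    have hx' : scale γ x ∈ C := hC γ hγ0 x hx
    rw [hφdef k hk x hx, hφdef k hk _ hx', hαhom γ hγ0 x hx, hβhom γ hγ0 x hx,
      one_mul, one_mul]
    have hE := Real.exp_pos (-(r * t k))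
    have hm1 : α x - β x - K ≤ max (α x - β x - K) 0 := le_max_left _ _
    have hm0 : (0:ℝ) ≤ max (α x - β x - K) 0 := le_max_right _ _
    have hkey : max (γ * α x - γ * β x - K) 0 ≤ γ * max (α x - β x - K) 0 + (γ - 1) * K := by
      apply max_le
      · nlinarith
      · nlinarith
    nlinarith [mul_le_mul_of_nonneg_left hkey hE.le]
  -- the main backward induction
  have key : ∀ j : ℕ, ∀ k : ℕ, k + j = n →
      v k ∈ La ∧ e k ∈ La ∧ (∀ x ∈ C, e k x ≤ v k x) ∧
      (∀ γ : ℝ, 1 ≤ γ → ∀ x ∈ C,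
        v k (scale γ x) ≤ γ * v k x + (γ - 1) * K * Real.exp (-(r * t k))) := by
    intro j
    induction j with
    | zero =>
      intro k hkn
      obtain rfl : k = n := by omega
      have hvLa : v k ∈ La :=
        hLa_congr (φ k) (hφLa k le_rfl) (v k) (fun x hx => (hvn x hx).symm)
      have heLa : e k ∈ La :=
        hLa_congr (φ k) (hφLa k le_rfl) (e k) (fun x hx => (hen x hx).symm)
      refine ⟨hvLa, heLa, fun x hx => by rw [hen x hx, hvn x hx], ?_⟩
      intro γ hγ x hx
      have hγ0 : (0:ℝ) < γ := by linarith
      have hx' : scale γ x ∈ C := hC γ hγ0 x hx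
      rw [hvn _ hx', hvn x hx]
      exact hφscale k le_rfl γ hγ x hx
    | succ j ih =>
      intro k hkn
      have hk : k < n := by omega
      obtain ⟨hvLa1, heLa1, hev1, hvs1⟩ := ih (k + 1) (by omega)
      obtain ⟨hint_v, hVLa⟩ := hgc k hk _ hvLa1
      obtain ⟨hint_e, hELa⟩ := hgc k hk _ heLa1
      have hvLa : v k ∈ La :=
        hLa_congr _ (hLa_max _ (hφLa k hk.le) _ hVLa) (v k)
          (fun x hx => (hv k hk x hx).symm)
      have heLa : e k ∈ La :=
        hLa_congr _ hELa (e k) (fun x hx => (he k hk x hx).symm)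
      refine ⟨hvLa, heLa, ?_, ?_⟩
      · intro x hx
        rw [he k hk x hx, hv k hk x hx]
        refine le_trans ?_ (le_max_right _ _)
        exact integral_mono_ae (hint_e x hx) (hint_v x hx)
          ((hAE k hk x hx).mono fun z hz => hev1 z hz)
      · intro γ hγ x hx
        have hγ0 : (0:ℝ) < γ := by linarith
        have hx' : scale γ x ∈ C := hC γ hγ0 x hx
        haveI := hκ k
        rw [hv k hk _ hx', hv k hk x hx]
        have hmap : Measure.map (scale γ) ((κ k) x) = (κ k) (scale γ x) :=
          hκscale k hk γ hγ0 x hx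
        have hasm : AEStronglyMeasurable (v (k+1)) (Measure.map (scale γ) ((κ k) x)) := by
          rw [hmap]; exact (hint_v _ hx').aestronglyMeasurable
        have hI' : ∫ y, v (k+1) y ∂((κ k) (scale γ x))
            = ∫ z, v (k+1) (scale γ z) ∂((κ k) x) := by
          rw [← hmap, integral_map (hmeas γ).aemeasurable hasm]
        have hint_comp : Integrable (fun z => v (k+1) (scale γ z)) ((κ k) x) := by
          have := (integrable_map_measure hasm (hmeas γ).aemeasurable).mp
            (by rw [hmap]; exact hint_v _ hx')
          exact this
        have hint_rhs : Integrable
            (fun z => γ * v (k+1) z + (γ - 1) * K * Real.exp (-(r * t (k+1))))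
            ((κ k) x) := ((hint_v x hx).const_mul γ).add (integrable_const _)
        have hle : ∫ z, v (k+1) (scale γ z) ∂((κ k) x)
            ≤ ∫ z, (γ * v (k+1) z + (γ - 1) * K * Real.exp (-(r * t (k+1)))) ∂((κ k) x) :=
          integral_mono_ae hint_comp hint_rhs
            ((hAE k hk x hx).mono fun z hz => hvs1 γ hγ z hz)
        have hcalc : ∫ z, (γ * v (k+1) z + (γ - 1) * K * Real.exp (-(r * t (k+1)))) ∂((κ k) x)
            = γ * (∫ z, v (k+1) z ∂((κ k) x)) + (γ - 1) * K * Real.exp (-(r * t (k+1))) := by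
          rw [integral_add ((hint_v x hx).const_mul γ) (integrable_const _),
            integral_const_mul, integral_const]
          simp [measure_univ]
        have hexp : Real.exp (-(r * t (k+1))) ≤ Real.exp (-(r * t k)) := by
          apply Real.exp_le_exp.mpr
          have := ht k hk
          nlinarith
        apply max_le
        · have h1 := hφscale k hk.le γ hγ x hx
          have h2 : γ * φ k x ≤ γ * max (φ k x) (∫ y, v (k+1) y ∂((κ k) x)) :=
            mul_le_mul_of_nonneg_left (le_max_left _ _) hγ0.le
          linarith
        · have h2 : γ * (∫ y, v (k+1) y ∂((κ k) x))
              ≤ γ * max (φ k x) (∫ y, v (k+1) y ∂((κ k) x)) :=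
            mul_le_mul_of_nonneg_left (le_max_right _ _) hγ0.le
          have h3 : (γ - 1) * K * Real.exp (-(r * t (k+1)))
              ≤ (γ - 1) * K * Real.exp (-(r * t k)) := by
            apply mul_le_mul_of_nonneg_left hexp
            nlinarith
          calc ∫ y, v (k+1) y ∂((κ k) (scale γ x))
              = ∫ z, v (k+1) (scale γ z) ∂((κ k) x) := hI'
            _ ≤ _ := hle
            _ = _ := hcalc
            _ ≤ γ * max (φ k x) (∫ y, v (k+1) y ∂((κ k) x))
                + (γ - 1) * K * Real.exp (-(r * t k)) := by linarith
  -- conclusion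
  intro k hk x hxS γ hγ
  rw [hS] at hxS
  obtain ⟨hxC, hvx⟩ := hxS
  have hγ0 : (0:ℝ) < γ := by linarith
  have hx'C : scale γ x ∈ C := hC γ hγ0 x hxC
  obtain ⟨hvLa, heLa, hev, hvs⟩ := key (n - k) k (by omega)
  have hφpos : 0 < φ k x := lt_of_lt_of_le (hepos k hk x hxC) (hvx ▸ hev x hxC)
  have hαβ : K < α x - β x := by
    by_contra h
    push_neg at h
    have : φ k x = 0 := by
      rw [hφdef k hk.le x hxC, one_mul, max_eq_right (by linarith), mul_zero]
    linarith
  have hφ' : φ k (scale γ x) = γ * φ k x + (γ - 1) * K * Real.exp (-(r * t k)) := by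
    rw [hφdef k hk.le x hxC, hφdef k hk.le _ hx'C, hαhom γ hγ0 x hxC, hβhom γ hγ0 x hxC,
      one_mul, one_mul, max_eq_left (by nlinarith), max_eq_left (by linarith)]
    ring
  have h1 : v k (scale γ x) ≤ φ k (scale γ x) := by
    calc v k (scale γ x) ≤ γ * v k x + (γ - 1) * K * Real.exp (-(r * t k)) :=
          hvs γ hγ x hxC
      _ = φ k (scale γ x) := by rw [hvx, hφ']
  have h2 : φ k (scale γ x) ≤ v k (scale γ x) := by
    rw [hv k hk _ hx'C]; exact le_max_left _ _
  rw [hS]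
  exact ⟨hx'C, le_antisymm h1 h2⟩
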